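/- If a finitely generated projective R-algebra B admits a standard involution, then this standard involution is unique. -/

import Mathlib

/-- `σ` is a standard involution on the `R`-algebra `B`: an `R`-linear anti-automorphism
with `σ(1) = 1`, `σ² = id`, and `x·σ(x) ∈ R` for all `x`. -/
def IsStandardInvolution (R : Type*) {B : Type*} [CommRing R] [Ring B] [Algebra R B]
    (σ : B →ₗ[R] B) : Prop :=
  σ 1 = 1 ∧ (∀ x y : B, σ (x * y) = σ y * σ x) ∧ (∀ x : B, σ (σ x) = x) ∧
    ∀ x : B, x * σ x ∈ (algebraMap R B).range

open IsLocalRing in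
/-- Key local lemma: over a local ring, a linear map `S` with `S 1 = 0`, values in `R·1`,
and `x * S x ∈ R·1` for all `x`, vanishes on a finite projective algebra. -/
theorem aux_local_stmt12 {R B : Type*} [CommRing R] [IsLocalRing R] [Ring B] [Algebra R B]
    [Module.Finite R B] [Module.Projective R B] (S : B →ₗ[R] B) (h1 : S 1 = 0)
    (hA : ∀ x : B, S x ∈ (algebraMap R B).range)
    (hx : ∀ x : B, x * S x ∈ (algebraMap R B).range) (x : B) : S x = 0 := by
  rcases subsingleton_or_nontrivial B with h | h
  · exact Subsingleton.elim _ _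
  have hfp : Module.FinitePresentation R B := Module.finitePresentation_of_projective R B
  have hfree : Module.Free R B := Module.free_of_flat_of_isLocalRing
  let b := Module.Free.chooseBasis R B
  -- some coordinate of `1` is a unit
  have hex : ∃ i, IsUnit (b.repr 1 i) := by
    by_contra hc
    push_neg at hc
    have h1m : (1 : B) ∈ (maximalIdeal R) • (⊤ : Submodule R B) := by
      have hsum : Finsupp.linearCombination R b (b.repr 1) ∈
          (maximalIdeal R) • (⊤ : Submodule R B) := by
        rw [Finsupp.linearCombination_apply, Finsupp.sum]
        refine Submodule.sum_mem _ fun i _ => ?_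
        exact Submodule.smul_mem_smul (IsLocalRing.mem_maximalIdeal _ |>.mpr (hc i)) trivial
      rwa [b.linearCombination_repr] at hsum
    have htop : (⊤ : Submodule R B) ≤ (maximalIdeal R) • (⊤ : Submodule R B) := by
      intro z _
      have : z * 1 ∈ (maximalIdeal R) • (⊤ : Submodule R B) := by
        refine Submodule.smul_induction_on h1m (fun r hr n _ => ?_) (fun m n hm hn => ?_)
        · rw [mul_smul_comm]
          exact Submodule.smul_mem_smul hr trivial
        · rw [mul_add]
          exact Submodule.add_mem _ hm hn
      rwa [mul_one] at this
    have hb := Submodule.eq_bot_of_le_smul_of_le_jacobson_bot (maximalIdeal R) ⊤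
      Module.Finite.fg_top htop (le_of_eq (IsLocalRing.jacobson_eq_maximalIdeal ⊥ bot_ne_top).symm)
    have : (1 : B) ∈ (⊥ : Submodule R B) := hb ▸ trivial
    exact one_ne_zero (Submodule.mem_bot R |>.mp this)
  obtain ⟨i₀, hu⟩ := hex
  let f : B →ₗ[R] R := ((hu.unit⁻¹ : Rˣ) : R) • b.coord i₀
  have hf1 : f 1 = 1 := by
    show ((hu.unit⁻¹ : Rˣ) : R) * b.repr 1 i₀ = 1
    have h := hu.unit.inv_mul
    rwa [hu.unit_spec] at h
  have hfmul : ∀ r : R, f (algebraMap R B r) = r := by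
    intro r
    rw [Algebra.algebraMap_eq_smul_one, map_smul, hf1, smul_eq_mul, mul_one]
  have hmem : ∀ z : B, z - f z • 1 ∈ LinearMap.ker f := by
    intro z
    rw [LinearMap.mem_ker, map_sub, map_smul, hf1, smul_eq_mul, mul_one, sub_self]
  by_cases hK : LinearMap.ker f = ⊥
  · have hzz : x = f x • (1 : B) := by
      have hm := hmem x
      rw [hK, Submodule.mem_bot] at hm
      exact sub_eq_zero.mp hm
    rw [hzz, map_smul, h1, smul_zero]
  · set K := LinearMap.ker f with hKdef
    let π : B →ₗ[R] K :=
      (LinearMap.id - (LinearMap.toSpanSingleton R B 1) ∘ₗ f).codRestrict K hmem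
    have hπval : ∀ z : B, (π z : B) = z - f z • 1 := fun z => rfl
    have hsplit : ∀ k : K, π (k : B) = k := by
      intro k
      apply Subtype.ext
      rw [hπval, k.2, zero_smul, sub_zero]
    have : Module.Projective R K :=
      Module.Projective.of_split K.subtype π (by ext k; exact congrArg Subtype.val (hsplit k))
    have : Module.Finite R K :=
      Module.Finite.of_surjective π (fun k => ⟨(k : B), hsplit k⟩)
    have : Module.FinitePresentation R K := Module.finitePresentation_of_projective R K
    have hKfree : Module.Free R K := Module.free_of_flat_of_isLocalRing
    have : Nontrivial K := by
      obtain ⟨y, hy, hy0⟩ := (Submodule.ne_bot_iff K).mp hK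
      exact ⟨⟨y, hy⟩, 0, by simpa using hy0⟩
    let bK := Module.Free.chooseBasis R K
    obtain ⟨j⟩ := bK.index_nonempty
    let e : B := (bK j : B)
    have hfe : f e = 0 := (bK j).2
    have he : ∀ c : R, c • e ∈ (algebraMap R B).range → c • e = 0 := by
      rintro c ⟨r, hr⟩
      have hr0 : r = 0 := by
        have h := congrArg f hr
        rwa [hfmul, map_smul, hfe, smul_zero] at h
      rw [← hr, hr0, map_zero]
    have he0 : ∀ c : R, c • e = 0 → c = 0 := by
      intro c hc
      have h2 : c • (bK j) = 0 := by
        apply Subtype.ext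
        simpa [e] using hc
      have h3 := congrArg (fun k => bK.repr k j) h2
      simpa using h3
    have hmulalg : ∀ (z : B) (r : R), z * algebraMap R B r = r • z := by
      intro z r
      rw [Algebra.algebraMap_eq_smul_one, mul_smul_comm, mul_one]
    have hSe : S e = 0 := by
      obtain ⟨v, hv⟩ := hA e
      have h2 := hx e
      rw [← hv, hmulalg] at h2
      have hv0 := he0 v (he v h2)
      rw [← hv, hv0, map_zero]
    obtain ⟨w, hw⟩ := hA x
    have h3 := hx (x + e)
    rw [map_add, hSe, add_zero, add_mul] at h3
    have h4 : e * S x ∈ (algebraMap R B).range := by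
      have h5 := sub_mem h3 (hx x)
      simpa using h5
    rw [← hw, hmulalg] at h4
    have hw0 := he0 w (he w h4)
    rw [← hw, hw0, map_zero]

/-- A finitely generated projective `R`-algebra has at most one standard involution. -/
theorem stmt12 (R B : Type) [CommRing R] [IsNoetherianRing R] [Ring B] [Algebra R B]
    [Module.Finite R B] [Module.Projective R B]
    (hconn : ∀ e : R, IsIdempotentElem e → e = 0 ∨ e = 1)
    (σ τ : B →ₗ[R] B) (hσ : IsStandardInvolution R σ) (hτ : IsStandardInvolution R τ) :
    σ = τ := by
  have tr : ∀ ρ : B →ₗ[R] B, IsStandardInvolution R ρ →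
      ∀ x : B, x + ρ x ∈ (algebraMap R B).range := by
    rintro ρ ⟨h1, hmul, hinv, hnorm⟩ x
    have h := hnorm (x + 1)
    rw [map_add, h1] at h
    have hexp : x + ρ x = (x + 1) * (ρ x + 1) - x * ρ x - 1 := by noncomm_ring
    rw [hexp]
    exact sub_mem (sub_mem h (hnorm x)) (one_mem _)
  set S := σ - τ with hSdef
  have hSA : ∀ x : B, S x ∈ (algebraMap R B).range := by
    intro x
    have hrw : S x = (x + σ x) - (x + τ x) := by
      rw [hSdef, LinearMap.sub_apply]; abel
    rw [hrw]
    exact sub_mem (tr σ hσ x) (tr τ hτ x)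
  have hS1 : S 1 = 0 := by
    rw [hSdef, LinearMap.sub_apply, hσ.1, hτ.1, sub_self]
  have hSx : ∀ x : B, x * S x ∈ (algebraMap R B).range := by
    intro x
    rw [hSdef, LinearMap.sub_apply, mul_sub]
    exact sub_mem (hσ.2.2.2 x) (hτ.2.2.2 x)
  have key : ∀ x : B, S x = 0 := by
    intro x
    apply Module.eq_zero_of_localization_maximal (R := R) (M := B)
      (Mₚ := fun P _ => LocalizedModule P.primeCompl B)
      (f := fun P _ => LocalizedModule.mkLinearMap P.primeCompl B)
    intro P hP
    haveI : Module.Finite (Localization P.primeCompl) (LocalizedModule P.primeCompl B) :=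
      Module.Finite.of_isLocalizedModule P.primeCompl (LocalizedModule.mkLinearMap P.primeCompl B)
    haveI : Module.Projective (Localization P.primeCompl) (LocalizedModule P.primeCompl B) :=
      Module.projective_of_isLocalizedModule P.primeCompl
        (LocalizedModule.mkLinearMap P.primeCompl B)
    let Sm : LocalizedModule P.primeCompl B →ₗ[Localization P.primeCompl]
        LocalizedModule P.primeCompl B := LocalizedModule.map P.primeCompl S
    have hmk : ∀ (a : B) (s : P.primeCompl),
        Sm (LocalizedModule.mk a s) = LocalizedModule.mk (S a) s := fun a s =>
      LocalizedModule.map_mk P.primeCompl S a s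
    have h1' : Sm 1 = 0 := by
      have hone : (1 : LocalizedModule P.primeCompl B) = LocalizedModule.mk 1 1 := by
        rw [OreLocalization.one_def]
      rw [hone, hmk, hS1, LocalizedModule.zero_mk]
    letI : Algebra (Localization P.primeCompl) (LocalizedModule P.primeCompl B) :=
      Algebra.ofModule
        (fun r x y => by
          induction r using Localization.induction_on with | H p => ?_
          induction x, y using LocalizedModule.induction_on₂ with | _ a₁ s₁ a₂ s₂ => ?_
          simp only [LocalizedModule.mk_smul_mk, LocalizedModule.mk_mul_mk, smul_mul_assoc,
            mul_assoc])
        (fun r x y => by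
          induction r using Localization.induction_on with | H p => ?_
          induction x, y using LocalizedModule.induction_on₂ with | _ a₁ s₁ a₂ s₂ => ?_
          simp only [LocalizedModule.mk_smul_mk, LocalizedModule.mk_mul_mk, mul_smul_comm,
            mul_left_comm])
    have hamk : ∀ (a : R) (s : P.primeCompl), algebraMap (Localization P.primeCompl)
        (LocalizedModule P.primeCompl B) (Localization.mk a s) =
          LocalizedModule.mk (algebraMap R B a) s := fun a s => by
      rw [Algebra.algebraMap_eq_smul_one, show (1 : LocalizedModule P.primeCompl B) =
        LocalizedModule.mk 1 1 by rw [OreLocalization.one_def], LocalizedModule.mk_smul_mk,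
        mul_one, Algebra.algebraMap_eq_smul_one]
    have hA' : ∀ z : LocalizedModule P.primeCompl B,
        Sm z ∈ (algebraMap (Localization P.primeCompl) (LocalizedModule P.primeCompl B)).range := by
      intro z
      induction z using LocalizedModule.induction_on with
      | h a s =>
        obtain ⟨r, hr⟩ := hSA a
        exact ⟨Localization.mk r s, by rw [hamk, hr, hmk]⟩
    have hx' : ∀ z : LocalizedModule P.primeCompl B,
        z * Sm z ∈
          (algebraMap (Localization P.primeCompl) (LocalizedModule P.primeCompl B)).range := by
      intro z
      induction z using LocalizedModule.induction_on with
      | h a s =>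
        obtain ⟨r, hr⟩ := hSx a
        refine ⟨Localization.mk r (s * s), ?_⟩
        rw [hamk, hr, hmk, LocalizedModule.mk_mul_mk]
    have hz := aux_local_stmt12 (R := Localization P.primeCompl)
      (B := LocalizedModule P.primeCompl B) Sm h1' hA' hx' (LocalizedModule.mk x 1)
    show LocalizedModule.mkLinearMap P.primeCompl B (S x) = 0
    rw [LocalizedModule.mkLinearMap_apply, ← hmk x 1]
    exact hz
  ext x
  have hk := key x
  rw [hSdef, LinearMap.sub_apply, sub_eq_zero] at hk
  exact hk
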